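/- Let c > 0 and b be real with b > c², let x ∈ ℝ with 0 < x < c, and let y ∈ ℝ. Set A = x + iy and λ = ½(A − c + √((A + c)² − 4b)), where √ is the principal square root. Then Re λ = 0 if and only if y² = (b − cx)(c − x)²/(cx). -/

import Mathlib

/-- The principal square root on `ℂ`: the square root with nonnegative real part
(and nonnegative imaginary part when the real part is zero). -/
noncomputable def csqrt (z : ℂ) : ℂ := z ^ (1 / 2 : ℂ)

lemma csqrt_re (z : ℂ) : (csqrt z).re = Real.sqrt ((‖z‖ + z.re) / 2) := by
  rw [csqrt, one_div, Complex.cpow_inv_two_re]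

/-- For `c > 0`, `b > c²`, `0 < x < c`, `A = x + iy` and
`λ = ½(A − c + √((A+c)² − 4b))`: `Re λ = 0` iff `y² = (b − cx)(c − x)²/(cx)`. -/
theorem stmt18 (b c : ℝ) (hc : 0 < c) (hb : c ^ 2 < b) (x y : ℝ)
    (hx0 : 0 < x) (hxc : x < c) :
    let A : ℂ := (x : ℂ) + (y : ℂ) * Complex.I
    let lam : ℂ := (A - (c : ℂ) + csqrt ((A + (c : ℂ)) ^ 2 - 4 * (b : ℂ))) / 2
    (lam.re = 0 ↔ y ^ 2 = (b - c * x) * (c - x) ^ 2 / (c * x)) := by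
  intro A lam
  set w : ℂ := (A + (c : ℂ)) ^ 2 - 4 * (b : ℂ) with hw
  have hwre : w.re = (x + c) ^ 2 - y ^ 2 - 4 * b := by
    simp [hw, A, pow_two, Complex.add_re, Complex.add_im, Complex.mul_re, Complex.mul_im]
  have hwim : w.im = 2 * (x + c) * y := by
    simp [hw, A, pow_two, Complex.add_re, Complex.add_im, Complex.mul_re, Complex.mul_im]
    ring
  have habs : (‖w‖) ^ 2 = w.re ^ 2 + w.im ^ 2 := by
    rw [Complex.sq_norm, Complex.normSq_apply]; try ring
  have hlamre : lam.re = (x - c + (csqrt w).re) / 2 := by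
    simp [lam, A, Complex.add_re, Complex.sub_re, Complex.div_re]
    try ring
  have hre : (csqrt w).re = Real.sqrt ((‖w‖ + w.re) / 2) := csqrt_re w
  have harg_nonneg : 0 ≤ (‖w‖ + w.re) / 2 := by
    have := Complex.abs_re_le_norm w
    have := abs_le.mp this
    linarith [this.1]
  have hcx : 0 < c - x := by linarith
  -- key: Re λ = 0 ↔ sqrt((|w|+w.re)/2) = c - x ↔ (|w|+w.re)/2 = (c-x)^2
  have step1 : lam.re = 0 ↔ (‖w‖ + w.re) / 2 = (c - x) ^ 2 := by
    rw [hlamre, hre]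
    constructor
    · intro h
      have hs : Real.sqrt ((‖w‖ + w.re) / 2) = c - x := by linarith
      rw [← hs]; rw [Real.sq_sqrt harg_nonneg]
    · intro h
      rw [h, Real.sqrt_sq hcx.le]; ring
  rw [step1]
  -- (|w|+p)/2 = (c-x)^2 ↔ |w| = 2(c-x)^2 - p ↔ |w|^2 = (2(c-x)^2-p)^2
  have hrhs_nonneg : 0 ≤ 2 * (c - x) ^ 2 - w.re := by
    rw [hwre]; nlinarith [sq_nonneg y, sq_nonneg (c - x)]
  have step2 : (‖w‖ + w.re) / 2 = (c - x) ^ 2 ↔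
      (‖w‖) ^ 2 = (2 * (c - x) ^ 2 - w.re) ^ 2 := by
    constructor
    · intro h
      have : ‖w‖ = 2 * (c - x) ^ 2 - w.re := by linarith
      rw [this]
    · intro h
      have habs' : ‖w‖ = 2 * (c - x) ^ 2 - w.re := by
        nlinarith [norm_nonneg w]
      linarith
  rw [step2, habs, hwre, hwim]
  have hcx0 : c * x ≠ 0 := by positivity
  rw [eq_div_iff hcx0]
  constructor
  · intro h
    linear_combination h / 16
  · intro h
    linear_combination 16 * h
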